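/- For every real r ≥ 1 and every x ≥ 1/2, one has r·ψ(rx) ≥ ψ(x), where ψ = Γ'/Γ is the digamma function. -/

import Mathlib

open Real
open Finset

/-- The digamma function `ψ = Γ'/Γ`. -/
noncomputable def digamma (x : ℝ) : ℝ := deriv Real.Gamma x / Real.Gamma x

lemma log_ratio_lb {a : ℝ} (ha : 0 < a) : 1 - a / (a + 1) ≤ Real.log (a + 1) - Real.log a := by
  have h1 : Real.log (a / (a + 1)) ≤ a / (a + 1) - 1 :=
    Real.log_le_sub_one_of_pos (by positivity)
  rw [Real.log_div ha.ne' (by positivity)] at h1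
  linarith

/-- Key numeric estimate: `∑_{j=0}^{n} 4j/(2j+1)² ≤ log n` for `n ≥ 3`. -/
lemma sum_step (n : ℕ) (hn : 3 ≤ n) :
    ∑ j ∈ Finset.range (n + 1), 4 * (j : ℝ) / (2 * j + 1) ^ 2 ≤ Real.log n := by
  induction n with
  | zero => omega
  | succ m ih =>
    rcases Nat.lt_or_ge m 3 with hm | hm
    · interval_cases m
      · omega
      · omega
      · have h2 : (1:ℝ)/3 ≤ Real.log 3 - Real.log 2 := by
          have := log_ratio_lb (a := 2) (by norm_num)
          norm_num at this ⊢
          linarith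
        have hl2 : (0.6931471803 : ℝ) < Real.log 2 := Real.log_two_gt_d9
        rw [show ((3:ℕ) + 1) = 4 by rfl]
        rw [Finset.sum_range_succ, Finset.sum_range_succ, Finset.sum_range_succ,
          Finset.sum_range_succ, Finset.sum_range_zero]
        push_cast
        norm_num
        linarith
    · have step : 4 * ((m:ℝ) + 1) / (2 * (m + 1) + 1) ^ 2 ≤ Real.log (m + 1) - Real.log m := by
        have hm0 : (0:ℝ) < m := by positivity
        have h1 := log_ratio_lb (a := (m : ℝ)) hm0
        have h2 : 4 * ((m:ℝ) + 1) / (2 * (m + 1) + 1) ^ 2 ≤ 1 - (m:ℝ) / (m + 1) := by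
          rw [div_le_iff₀ (by positivity)]
          have : 1 - (m:ℝ)/(m+1) = 1/(m+1) := by field_simp; ring
          rw [this]
          rw [div_mul_eq_mul_div, le_div_iff₀ (by positivity)]
          nlinarith [sq_nonneg ((m:ℝ))]
        linarith
      have := ih hm
      rw [Finset.sum_range_succ]
      push_cast
      push_cast at this
      linarith [step]

/-- approximant to `log Γ(eˢ)` -/
noncomputable def gA (n : ℕ) (s : ℝ) : ℝ :=
  Real.exp s * Real.log n + Real.log (Nat.factorial n) - ∑ j ∈ Finset.range (n + 1), Real.log (Real.exp s + j)

noncomputable def gA' (n : ℕ) (s : ℝ) : ℝ :=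
  Real.exp s * Real.log n - ∑ j ∈ Finset.range (n + 1), Real.exp s / (Real.exp s + j)

noncomputable def gA'' (n : ℕ) (s : ℝ) : ℝ :=
  Real.exp s * Real.log n - ∑ j ∈ Finset.range (n + 1), j * Real.exp s / (Real.exp s + j) ^ 2

lemma exp_add_nat_pos (s : ℝ) (j : ℕ) : 0 < Real.exp s + j := by
  have := Real.exp_pos s; positivity

lemma hasDerivAt_gA (n : ℕ) (s : ℝ) : HasDerivAt (gA n) (gA' n s) s := by
  have h1 : HasDerivAt (fun s => Real.exp s * Real.log n + Real.log (Nat.factorial n))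
      (Real.exp s * Real.log n) s :=
    ((Real.hasDerivAt_exp s).mul_const _).add_const _
  have h2 : HasDerivAt (fun s => ∑ j ∈ Finset.range (n + 1), Real.log (Real.exp s + j))
      (∑ j ∈ Finset.range (n + 1), Real.exp s / (Real.exp s + j)) s := by
    apply HasDerivAt.fun_sum
    intro j _
    exact ((Real.hasDerivAt_exp s).add_const _).log (exp_add_nat_pos s j).ne'
  exact h1.sub h2

lemma hasDerivAt_gA' (n : ℕ) (s : ℝ) : HasDerivAt (gA' n) (gA'' n s) s := by
  have h1 : HasDerivAt (fun s => Real.exp s * Real.log n) (Real.exp s * Real.log n) s :=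
    (Real.hasDerivAt_exp s).mul_const _
  have h2 : HasDerivAt (fun s => ∑ j ∈ Finset.range (n + 1), Real.exp s / (Real.exp s + j))
      (∑ j ∈ Finset.range (n + 1), j * Real.exp s / (Real.exp s + j) ^ 2) s := by
    apply HasDerivAt.fun_sum
    intro j _
    have hne := (exp_add_nat_pos s j).ne'
    have := (Real.hasDerivAt_exp s).div ((Real.hasDerivAt_exp s).add_const (j:ℝ)) hne
    convert this using 1
    · rfl
    · rfl
    ring
  exact h1.sub h2

lemma gA''_nonneg (n : ℕ) {s : ℝ} (hs : -Real.log 2 < s)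
    (hstep : ∑ j ∈ Finset.range (n + 1), 4 * (j : ℝ) / (2 * j + 1) ^ 2 ≤ Real.log n) :
    0 ≤ gA'' n s := by
  set t := Real.exp s with ht
  have htpos : 0 < t := Real.exp_pos s
  have hthalf : 1 / 2 < t := by
    have : Real.exp (-Real.log 2) < t := Real.exp_lt_exp.2 hs
    rwa [Real.exp_neg, Real.exp_log (by norm_num : (0:ℝ) < 2), ← one_div] at this
  have hsum : ∑ j ∈ Finset.range (n + 1), (j : ℝ) * t / (t + j) ^ 2
      ≤ t * Real.log n := by
    have heq : ∀ j ∈ Finset.range (n + 1),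
        (j : ℝ) * t / (t + j) ^ 2 = t * ((j : ℝ) / (t + j) ^ 2) := by
      intro j _; ring
    rw [Finset.sum_congr rfl heq, ← Finset.mul_sum]
    apply mul_le_mul_of_nonneg_left _ htpos.le
    calc ∑ j ∈ Finset.range (n + 1), (j : ℝ) / (t + j) ^ 2
        ≤ ∑ j ∈ Finset.range (n + 1), 4 * (j : ℝ) / (2 * j + 1) ^ 2 := by
          apply Finset.sum_le_sum
          intro j _
          have hj : (0:ℝ) ≤ j := Nat.cast_nonneg j
          have h1 : (0:ℝ) < t + j := by positivity
          rw [div_le_div_iff₀ (by positivity) (by positivity)]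
          nlinarith [sq_nonneg ((j:ℝ)), sq_nonneg (t - 1/2)]
      _ ≤ Real.log n := hstep
  unfold gA''
  rw [← ht]
  linarith

lemma gA_convexOn (n : ℕ)
    (hstep : ∑ j ∈ Finset.range (n + 1), 4 * (j : ℝ) / (2 * j + 1) ^ 2 ≤ Real.log n) :
    ConvexOn ℝ (Set.Ici (-Real.log 2)) (gA n) := by
  apply convexOn_of_hasDerivWithinAt2_nonneg (convex_Ici _)
    (f' := gA' n) (f'' := gA'' n)
  · intro s _
    exact (hasDerivAt_gA n s).continuousAt.continuousWithinAt
  · intro s _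
    exact (hasDerivAt_gA n s).hasDerivWithinAt
  · intro s _
    exact (hasDerivAt_gA' n s).hasDerivWithinAt
  · intro s hs
    rw [interior_Ici] at hs
    exact gA''_nonneg n hs hstep

lemma log_GammaSeq_eq (n : ℕ) (hn : 1 ≤ n) (s : ℝ) :
    Real.log (Real.GammaSeq (Real.exp s) n) = gA n s := by
  have htpos : 0 < Real.exp s := Real.exp_pos s
  have hprod : ∀ j ∈ Finset.range (n + 1), (0:ℝ) < Real.exp s + j := fun j _ =>
    exp_add_nat_pos s j
  have hprodpos : (0:ℝ) < ∏ j ∈ Finset.range (n + 1), (Real.exp s + j) :=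
    Finset.prod_pos hprod
  have hnpos : (0:ℝ) < n := by exact_mod_cast hn
  unfold Real.GammaSeq gA
  rw [Real.log_div (by positivity) hprodpos.ne', Real.log_mul (by positivity)
    (by exact_mod_cast (Nat.factorial_pos n).ne'), Real.log_rpow hnpos,
    Real.log_prod (fun j hj => (hprod j hj).ne')]

lemma tendsto_gA (s : ℝ) :
    Filter.Tendsto (fun n => gA n s) Filter.atTop
      (nhds (Real.log (Real.Gamma (Real.exp s)))) := by
  have hpos : 0 < Real.Gamma (Real.exp s) := Real.Gamma_pos_of_pos (Real.exp_pos s)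
  have h1 : Filter.Tendsto (fun n => Real.log (Real.GammaSeq (Real.exp s) n)) Filter.atTop
      (nhds (Real.log (Real.Gamma (Real.exp s)))) :=
    ((Real.continuousAt_log hpos.ne').tendsto).comp (Real.GammaSeq_tendsto_Gamma (Real.exp s))
  apply h1.congr'
  filter_upwards [Filter.eventually_ge_atTop 1] with n hn
  exact log_GammaSeq_eq n hn s

lemma G_convexOn : ConvexOn ℝ (Set.Ici (-Real.log 2))
    (fun s => Real.log (Real.Gamma (Real.exp s))) := by
  refine ⟨convex_Ici _, fun x hx y hy a b ha hb hab => ?_⟩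
  have key : ∀ᶠ n in Filter.atTop, gA n (a • x + b • y) ≤ a • gA n x + b • gA n y := by
    filter_upwards [Filter.eventually_ge_atTop 3] with n hn
    exact (gA_convexOn n (sum_step n hn)).2 hx hy ha hb hab
  exact le_of_tendsto_of_tendsto (tendsto_gA _)
    (((tendsto_gA x).const_mul a).add ((tendsto_gA y).const_mul b)) key

lemma hasDerivAt_G (s : ℝ) :
    HasDerivAt (fun s => Real.log (Real.Gamma (Real.exp s)))
      (Real.exp s * digamma (Real.exp s)) s := by
  have hpos : 0 < Real.exp s := Real.exp_pos s
  have hΓ : DifferentiableAt ℝ Real.Gamma (Real.exp s) := by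
    apply Real.differentiableAt_Gamma
    intro m
    have h0 : -(m:ℝ) ≤ 0 := by simp [Nat.cast_nonneg]
    intro h
    rw [h] at hpos
    linarith
  have hd : HasDerivAt (fun s => Real.Gamma (Real.exp s))
      (deriv Real.Gamma (Real.exp s) * Real.exp s) s :=
    (hΓ.hasDerivAt).comp s (Real.hasDerivAt_exp s)
  have hΓpos : 0 < Real.Gamma (Real.exp s) := Real.Gamma_pos_of_pos hpos
  have := hd.log hΓpos.ne'
  convert this using 1
  unfold digamma
  field_simp

theorem digamma_ineq (r x : ℝ) (hr : 1 ≤ r) (hx : 1 / 2 ≤ x) :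
    digamma x ≤ r * digamma (r * x) := by
  have hx0 : 0 < x := lt_of_lt_of_le (by norm_num) hx
  have hrx0 : 0 < r * x := by positivity
  have hmono := G_convexOn.monotoneOn_deriv
    (fun z _ => (hasDerivAt_G z).differentiableAt)
  have hderiv : ∀ z : ℝ, deriv (fun s => Real.log (Real.Gamma (Real.exp s))) z
      = Real.exp z * digamma (Real.exp z) := fun z => (hasDerivAt_G z).deriv
  have hlogmem : ∀ y : ℝ, 1 / 2 ≤ y → Real.log y ∈ Set.Ici (-Real.log 2) := by
    intro y hy
    have hy0 : (0:ℝ) < y := lt_of_lt_of_le (by norm_num) hy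
    rw [Set.mem_Ici, ← Real.log_inv]
    exact Real.log_le_log (by norm_num) (by rw [← one_div]; exact hy)
  have hxr : 1 / 2 ≤ r * x := le_trans hx (by nlinarith)
  have hab : Real.log x ≤ Real.log (r * x) :=
    Real.log_le_log hx0 (by nlinarith)
  have := hmono (hlogmem x hx) (hlogmem (r * x) hxr) hab
  rw [hderiv, hderiv, Real.exp_log hx0, Real.exp_log hrx0] at this
  -- this : x * digamma x ≤ r * x * digamma (r * x)
  rw [← mul_le_mul_iff_right₀ hx0]
  calc x * digamma x ≤ r * x * digamma (r * x) := this
    _ = x * (r * digamma (r * x)) := by ring
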